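/- Let Ω ⊂ ℝ^d be a nonempty bounded open set with closure Ω̄ and let r' > 1. Let α_n ∈ L^∞(Ω) and β_n ∈ L^∞(Ω;ℝ^d) satisfy α_n(x) + (1/r')|β_n(x)|^{r'} ≤ 0 for a.e. x ∈ Ω, for every n. Suppose β_n → β in L^{r'}(Ω;ℝ^d), and that there is a finite signed Borel measure α on Ω̄ such that ∫_Ω φ(x) α_n(x) dx → ∫_{Ω̄} φ dα for every continuous φ : Ω̄ → ℝ. Then for every nonnegative continuous φ : Ω̄ → ℝ one has ∫_{Ω̄} φ dα + (1/r') ∫_Ω φ(x)|β(x)|^{r'} dx ≤ 0. -/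

import Mathlib

open MeasureTheory Filter
open scoped RealInnerProductSpace ENNReal Topology

/-- The integral of a function against a finite signed measure, via its Jordan
decomposition: `∫ φ dα := ∫ φ dα⁺ - ∫ φ dα⁻`. -/
noncomputable def signedIntegral {E : Type*} [MeasurableSpace E]
    (α : SignedMeasure E) (φ : E → ℝ) : ℝ :=
  (∫ x, φ x ∂α.toJordanDecomposition.posPart) -
    ∫ x, φ x ∂α.toJordanDecomposition.negPart

/-- Closedness of the constraint set: if `α_n ∈ L^∞(Ω)`, `β_n ∈ L^∞(Ω;ℝ^d)` satisfy
`α_n + (1/r')|β_n|^{r'} ≤ 0` a.e., `β_n → β` in `L^{r'}` and `α_n dx → α` weakly-* against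
continuous functions on `Ω̄`, then `∫_{Ω̄} φ dα + (1/r') ∫_Ω φ |β|^{r'} dx ≤ 0` for every
continuous `φ ≥ 0` on `Ω̄`. -/
theorem stmt_5 (d : ℕ) (Ω : Set (EuclideanSpace ℝ (Fin d)))
    (hΩne : Ω.Nonempty) (hΩo : IsOpen Ω) (hΩb : Bornology.IsBounded Ω)
    (r' : ℝ) (hr' : 1 < r')
    (αn : ℕ → EuclideanSpace ℝ (Fin d) → ℝ)
    (βn : ℕ → EuclideanSpace ℝ (Fin d) → EuclideanSpace ℝ (Fin d))
    (hαnmeas : ∀ n, AEStronglyMeasurable (αn n) (volume.restrict Ω))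
    (hβnmeas : ∀ n, AEStronglyMeasurable (βn n) (volume.restrict Ω))
    (hbdd : ∀ n, ∃ C : ℝ, ∀ᵐ x ∂volume.restrict Ω, |αn n x| ≤ C ∧ ‖βn n x‖ ≤ C)
    (hconstr : ∀ n, ∀ᵐ x ∂volume.restrict Ω, αn n x + (1 / r') * ‖βn n x‖ ^ r' ≤ 0)
    (β : EuclideanSpace ℝ (Fin d) → EuclideanSpace ℝ (Fin d))
    (hβ : MemLp β (ENNReal.ofReal r') (volume.restrict Ω))
    (hβconv : Tendsto
      (fun n => eLpNorm (fun x => βn n x - β x) (ENNReal.ofReal r') (volume.restrict Ω))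
      atTop (𝓝 0))
    (α : SignedMeasure (EuclideanSpace ℝ (Fin d)))
    (hconc : ∀ s : Set (EuclideanSpace ℝ (Fin d)),
      MeasurableSet s → Disjoint s (closure Ω) → α s = 0)
    (hαconv : ∀ φ : EuclideanSpace ℝ (Fin d) → ℝ, Continuous φ →
      Tendsto (fun n => ∫ x in Ω, φ x * αn n x) atTop (𝓝 (signedIntegral α φ))) :
    ∀ φ : EuclideanSpace ℝ (Fin d) → ℝ, Continuous φ → (∀ x ∈ closure Ω, 0 ≤ φ x) →
      signedIntegral α φ + (1 / r') * ∫ x in Ω, φ x * ‖β x‖ ^ r' ≤ 0 := by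
  intro φ hφc hφ0
  set μ := volume.restrict Ω with hμdef
  have hr'0 : (0:ℝ) < r' := lt_trans one_pos hr'
  have hmem : ∀ᵐ x ∂μ, x ∈ Ω := ae_restrict_mem hΩo.measurableSet
  have hφae : ∀ᵐ x ∂μ, 0 ≤ φ x := hmem.mono fun x hx => hφ0 x (subset_closure hx)
  have hcomp : IsCompact (closure Ω) :=
    Metric.isCompact_of_isClosed_isBounded isClosed_closure hΩb.closure
  have hfinΩ : μ Set.univ < ⊤ := by
    rw [Measure.restrict_apply_univ]
    exact lt_of_le_of_lt (measure_mono subset_closure) hcomp.measure_lt_top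
  haveI : IsFiniteMeasure μ := ⟨hfinΩ⟩
  -- bound for φ
  obtain ⟨M, hM⟩ := hcomp.exists_bound_of_continuousOn hφc.continuousOn
  have hφbd : ∀ᵐ x ∂μ, ‖φ x‖ ≤ M := hmem.mono fun x hx => hM x (subset_closure hx)
  -- integrability of the approximating integrands
  have hφmeas : AEStronglyMeasurable φ μ := hφc.aestronglyMeasurable
  have hαint : ∀ n, Integrable (fun x => φ x * αn n x) μ := by
    intro n
    obtain ⟨C, hC⟩ := hbdd n
    refine Integrable.mono' (integrable_const (M * C)) (hφmeas.mul (hαnmeas n)) ?_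
    filter_upwards [hφbd, hC] with x h1 h2
    calc ‖φ x * αn n x‖ = ‖φ x‖ * |αn n x| := by rw [norm_mul, Real.norm_eq_abs (αn n x)]
    _ ≤ M * C := by
        apply mul_le_mul h1 h2.1 (abs_nonneg _)
        exact le_trans (norm_nonneg _) h1
  have hβnint : ∀ n, Integrable (fun x => φ x * ‖βn n x‖ ^ r') μ := by
    intro n
    obtain ⟨C, hC⟩ := hbdd n
    have hmeasb : AEStronglyMeasurable (fun x => φ x * ‖βn n x‖ ^ r') μ := by
      exact hφmeas.mul (((hβnmeas n).norm.aemeasurable.pow_const r').aestronglyMeasurable)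
    refine Integrable.mono' (integrable_const (M * (max C 0) ^ r')) hmeasb ?_
    filter_upwards [hφbd, hC] with x h1 h2
    have hb : ‖βn n x‖ ^ r' ≤ (max C 0) ^ r' :=
      Real.rpow_le_rpow (norm_nonneg _) (le_trans h2.2 (le_max_left _ _)) hr'0.le
    calc ‖φ x * ‖βn n x‖ ^ r'‖ = ‖φ x‖ * ‖βn n x‖ ^ r' := by
          rw [norm_mul, Real.norm_eq_abs (‖βn n x‖ ^ r'),
            abs_of_nonneg (Real.rpow_nonneg (norm_nonneg _) _)]
    _ ≤ M * (max C 0) ^ r' := by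
        apply mul_le_mul h1 hb (Real.rpow_nonneg (norm_nonneg _) _)
        exact le_trans (norm_nonneg _) h1
  have hβnorm_int : Integrable (fun x => ‖β x‖ ^ r') μ := by
    have := hβ.integrable_norm_rpow (by simp [ENNReal.ofReal_eq_zero]; linarith) ENNReal.ofReal_ne_top
    rwa [ENNReal.toReal_ofReal hr'0.le] at this
  have hβint : Integrable (fun x => φ x * ‖β x‖ ^ r') μ := by
    refine Integrable.mono' (hβnorm_int.const_mul M)
      (hφmeas.mul ((hβ.aestronglyMeasurable.norm.aemeasurable.pow_const r').aestronglyMeasurable)) ?_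
    filter_upwards [hφbd] with x h1
    calc ‖φ x * ‖β x‖ ^ r'‖ = ‖φ x‖ * ‖β x‖ ^ r' := by
          rw [norm_mul, Real.norm_eq_abs (‖β x‖ ^ r'),
            abs_of_nonneg (Real.rpow_nonneg (norm_nonneg _) _)]
    _ ≤ M * ‖β x‖ ^ r' := by
        exact mul_le_mul_of_nonneg_right h1 (Real.rpow_nonneg (norm_nonneg _) _)
  -- Step 1 : the approximating inequality
  have hstep1 : ∀ n, (∫ x in Ω, φ x * αn n x) + (1 / r') * ∫ x in Ω, φ x * ‖βn n x‖ ^ r' ≤ 0 := by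
    intro n
    rw [← integral_const_mul, ← integral_add (hαint n) ((hβnint n).const_mul _)]
    apply integral_nonpos_of_ae
    filter_upwards [hφae, hconstr n] with x h1 h2
    have : φ x * αn n x + 1 / r' * (φ x * ‖βn n x‖ ^ r')
        = φ x * (αn n x + 1 / r' * ‖βn n x‖ ^ r') := by ring
    rw [this]
    exact mul_nonpos_of_nonneg_of_nonpos h1 h2
  -- Step 2 : a.e. convergent subsequence
  have htim : TendstoInMeasure μ βn atTop β := by
    refine tendstoInMeasure_of_tendsto_eLpNorm (p := ENNReal.ofReal r')
      (by simp [ENNReal.ofReal_eq_zero]; linarith) hβnmeas hβ.aestronglyMeasurable ?_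
    exact hβconv
  obtain ⟨ns, hnsmono, hns⟩ := htim.exists_seq_tendsto_ae
  -- Step 3 : subsequential convergence of the α integrals
  have hαsub : Tendsto (fun i => ∫ x in Ω, φ x * αn (ns i) x) atTop
      (𝓝 (signedIntegral α φ)) :=
    (hαconv φ hφc).comp (hnsmono.tendsto_atTop)
  set A := signedIntegral α φ with hA
  set B := ∫ x in Ω, φ x * ‖β x‖ ^ r' with hB
  -- Step 4 : B ≤ -r' * A via Fatou
  have hynonneg : ∀ n, (0:ℝ) ≤ ∫ x in Ω, φ x * ‖βn n x‖ ^ r' := by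
    intro n
    apply integral_nonneg_of_ae
    filter_upwards [hφae] with x h1
    exact mul_nonneg h1 (Real.rpow_nonneg (norm_nonneg _) _)
  have hyle : ∀ n, (∫ x in Ω, φ x * ‖βn n x‖ ^ r') ≤ -r' * ∫ x in Ω, φ x * αn n x := by
    intro n
    have h := hstep1 n
    have hr'ne : r' ≠ 0 := ne_of_gt hr'0
    have h4 : (1 / r') * (∫ x in Ω, φ x * ‖βn n x‖ ^ r') ≤ -(∫ x in Ω, φ x * αn n x) := by
      linarith
    have h5 := mul_le_mul_of_nonneg_left h4 hr'0.le
    have h6 : r' * ((1 / r') * (∫ x in Ω, φ x * ‖βn n x‖ ^ r'))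
        = ∫ x in Ω, φ x * ‖βn n x‖ ^ r' := by field_simp
    rw [h6] at h5
    linarith
  have hkey : B ≤ -r' * A := by
    refine le_of_forall_pos_le_add ?_
    intro ε hε
    -- eventually the subsequential y's are ≤ -r'*A + ε
    have hev : ∀ᶠ i in atTop, (∫ x in Ω, φ x * ‖βn (ns i) x‖ ^ r') ≤ -r' * A + ε := by
      have htnd : Tendsto (fun i => -r' * ∫ x in Ω, φ x * αn (ns i) x) atTop
          (𝓝 (-r' * A)) := hαsub.const_mul _
      have := htnd.eventually (eventually_le_nhds (lt_add_of_pos_right _ hε))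
      filter_upwards [this] with i hi
      exact le_trans (hyle (ns i)) hi
    have hRHS0 : 0 ≤ -r' * A + ε := by
      obtain ⟨i, hi⟩ := hev.exists
      exact le_trans (hynonneg (ns i)) hi
    -- Fatou's lemma
    have haemeas : ∀ i, AEMeasurable (fun x => ENNReal.ofReal (φ x * ‖βn (ns i) x‖ ^ r')) μ := by
      intro i
      exact (hφmeas.aemeasurable.mul
        ((hβnmeas (ns i)).norm.aemeasurable.pow_const r')).ennreal_ofReal
    have hfatou : (∫⁻ x, ENNReal.ofReal (φ x * ‖β x‖ ^ r') ∂μ)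
        ≤ liminf (fun i => ∫⁻ x, ENNReal.ofReal (φ x * ‖βn (ns i) x‖ ^ r') ∂μ) atTop := by
      refine le_trans (le_of_eq (lintegral_congr_ae ?_)) (lintegral_liminf_le' haemeas)
      filter_upwards [hns] with x hx
      have h1 : Tendsto (fun i => ‖βn (ns i) x‖ ^ r') atTop (𝓝 (‖β x‖ ^ r')) := by
        have hn : Tendsto (fun i => ‖βn (ns i) x‖) atTop (𝓝 ‖β x‖) := hx.norm
        exact ((Real.continuousAt_rpow_const _ _ (Or.inr hr'0.le)).tendsto.comp hn)
      have h2 : Tendsto (fun i => ENNReal.ofReal (φ x * ‖βn (ns i) x‖ ^ r')) atTop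
          (𝓝 (ENNReal.ofReal (φ x * ‖β x‖ ^ r'))) :=
        (ENNReal.continuous_ofReal.tendsto _).comp (h1.const_mul (φ x))
      exact h2.liminf_eq.symm
    have hBle : ENNReal.ofReal B ≤ ENNReal.ofReal (-r' * A + ε) := by
      have hBeq : ENNReal.ofReal B = ∫⁻ x, ENNReal.ofReal (φ x * ‖β x‖ ^ r') ∂μ := by
        refine ofReal_integral_eq_lintegral_ofReal hβint ?_
        filter_upwards [hφae] with x h1
        exact mul_nonneg h1 (Real.rpow_nonneg (norm_nonneg _) _)
      rw [hBeq]
      refine le_trans hfatou ?_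
      refine liminf_le_of_frequently_le ?_ (by isBoundedDefault)
      apply hev.frequently.mono
      intro i hi
      have hyi : ENNReal.ofReal (∫ x in Ω, φ x * ‖βn (ns i) x‖ ^ r')
          = ∫⁻ x, ENNReal.ofReal (φ x * ‖βn (ns i) x‖ ^ r') ∂μ := by
        refine ofReal_integral_eq_lintegral_ofReal (hβnint (ns i)) ?_
        filter_upwards [hφae] with x h1
        exact mul_nonneg h1 (Real.rpow_nonneg (norm_nonneg _) _)
      rw [← hyi]
      exact ENNReal.ofReal_le_ofReal hi
    have := (ENNReal.ofReal_le_ofReal_iff hRHS0).mp hBle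
    linarith [this]
  -- conclude
  have hr'ne : r' ≠ 0 := ne_of_gt hr'0
  have : (1 / r') * B ≤ (1 / r') * (-r' * A) :=
    mul_le_mul_of_nonneg_left hkey (by positivity)
  have heq : (1 / r') * (-r' * A) = -A := by field_simp
  rw [heq] at this
  linarith
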